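/- Let α be a finite set, f and q pmfs on α, M ≥ 1 a natural number, and δ a real number with δ ≥ H(q‖f). If X₁,…,X_M are i.i.d. with common pmf f and p̂ denotes their empirical distribution, then Pr(H(p̂‖q) ≥ δ) ≤ (M+1)^{|α|} · exp(−2·M·(δ − H(q‖f))²). -/

import Mathlib

open Finset

/-- `p` is a probability mass function on the finite type `α`. -/
def IsPmf {α : Type*} [Fintype α] (p : α → ℝ) : Prop :=
  (∀ a, 0 ≤ p a) ∧ ∑ a, p a = 1

/-- Squared Hellinger divergence between pmfs on a finite type. -/
noncomputable def hellingerSq {α : Type*} [Fintype α] (p q : α → ℝ) : ℝ :=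
  (1 / 2) * ∑ a, (Real.sqrt (p a) - Real.sqrt (q a)) ^ 2

/-- Hellinger distance between pmfs on a finite type. -/
noncomputable def hellinger {α : Type*} [Fintype α] (p q : α → ℝ) : ℝ :=
  Real.sqrt (hellingerSq p q)

/-- Empirical distribution of the sample `x = (x₁, …, x_M)`. -/
noncomputable def empDist {α : Type*} [Fintype α] [DecidableEq α] {M : ℕ}
    (x : Fin M → α) (a : α) : ℝ :=
  ((Finset.univ.filter fun i => x i = a).card : ℝ) / M

section AuxHellinger

set_option linter.unusedSectionVars false

variable {α : Type*} [Fintype α] [DecidableEq α]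

lemma prod_comp_eq_prod_pow {M : ℕ} (x : Fin M → α) (g : α → ℝ) :
    ∏ i, g (x i) = ∏ a, g a ^ (Finset.univ.filter fun i => x i = a).card := by
  rw [← Finset.prod_fiberwise_of_maps_to (fun i _ => Finset.mem_univ (x i)) (fun i => g (x i))]
  refine Finset.prod_congr rfl fun a _ => ?_
  rw [← Finset.prod_const]
  exact Finset.prod_congr rfl fun i hi => by rw [(Finset.mem_filter.mp hi).2]

lemma sum_card_fiber {M : ℕ} (x : Fin M → α) :
    ∑ a, (Finset.univ.filter fun i => x i = a).card = M := by
  rw [← Finset.card_eq_sum_card_fiberwise (fun i (_ : i ∈ Finset.univ) => Finset.mem_univ (x i))]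
  simp

lemma hellingerSq_nonneg (p q : α → ℝ) : 0 ≤ hellingerSq p q :=
  mul_nonneg (by norm_num) (Finset.sum_nonneg fun a _ => sq_nonneg _)

lemma hellinger_nonneg (p q : α → ℝ) : 0 ≤ hellinger p q := Real.sqrt_nonneg _

lemma hellinger_sq_eq (p q : α → ℝ) : hellinger p q ^ 2 = hellingerSq p q :=
  Real.sq_sqrt (hellingerSq_nonneg p q)

lemma hellinger_comm (p q : α → ℝ) : hellinger p q = hellinger q p := by
  unfold hellinger hellingerSq
  congr 2
  exact Finset.sum_congr rfl fun a _ => by ring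

lemma hellinger_eq_dist (p q : α → ℝ) :
    hellinger p q = Real.sqrt (1/2) * dist
      ((WithLp.equiv 2 (α → ℝ)).symm fun a => Real.sqrt (p a))
      ((WithLp.equiv 2 (α → ℝ)).symm fun a => Real.sqrt (q a)) := by
  rw [EuclideanSpace.dist_eq]
  unfold hellinger hellingerSq
  rw [← Real.sqrt_mul (by norm_num)]
  congr 2
  exact Finset.sum_congr rfl fun a _ => by simp [WithLp.equiv_symm_apply, Real.dist_eq, sq_abs]

lemma hellinger_triangle (p q r : α → ℝ) :
    hellinger p r ≤ hellinger p q + hellinger q r := by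
  rw [hellinger_eq_dist p r, hellinger_eq_dist p q, hellinger_eq_dist q r, ← mul_add]
  exact mul_le_mul_of_nonneg_left (dist_triangle _ _ _) (Real.sqrt_nonneg _)

lemma hellingerSq_eq_one_sub (p f : α → ℝ) (hp : IsPmf p) (hf : IsPmf f) :
    hellingerSq p f = 1 - ∑ a, Real.sqrt (p a * f a) := by
  unfold hellingerSq
  have h : ∀ a ∈ Finset.univ, (Real.sqrt (p a) - Real.sqrt (f a)) ^ 2
      = (p a + f a) - 2 * Real.sqrt (p a * f a) := by
    intro a _
    rw [sub_sq, Real.sq_sqrt (hp.1 a), Real.sq_sqrt (hf.1 a), Real.sqrt_mul (hp.1 a)]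
    ring
  rw [Finset.sum_congr rfl h, Finset.sum_sub_distrib, Finset.sum_add_distrib, hp.2, hf.2,
    ← Finset.mul_sum]
  ring

lemma key_bound (f : α → ℝ) (hf : IsPmf f) (M : ℕ) (hM : 1 ≤ M) (n : α → ℕ)
    (hn : ∑ a, n a = M) (t : ℝ) (ht : 0 ≤ t)
    (hH : t ≤ hellinger (fun a => (n a : ℝ) / M) f) :
    ∏ a, f a ^ n a ≤ Real.exp (-2 * M * t ^ 2) * ∏ a, ((n a : ℝ) / M) ^ n a := by
  set p : α → ℝ := fun a => (n a : ℝ) / M with hpdef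
  have hMpos : (0:ℝ) < M := by positivity
  have hp : IsPmf p := by
    constructor
    · intro a; exact div_nonneg (Nat.cast_nonneg _) hMpos.le
    · rw [← Finset.sum_div]
      rw [div_eq_one_iff_eq hMpos.ne']
      exact_mod_cast hn
  set S : ℝ := ∑ a, Real.sqrt (p a * f a) with hSdef
  have hS0 : 0 ≤ S := Finset.sum_nonneg fun a _ => Real.sqrt_nonneg _
  have hSle : S ≤ Real.exp (-t ^ 2) := by
    have h1 : hellingerSq p f = 1 - S := hellingerSq_eq_one_sub p f hp hf
    have h2 : t ^ 2 ≤ hellinger p f ^ 2 := pow_le_pow_left₀ ht hH 2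
    rw [hellinger_sq_eq] at h2
    have h3 := Real.add_one_le_exp (-t ^ 2)
    linarith
  -- AM-GM part
  set s : Finset α := Finset.univ.filter fun a => 0 < n a with hsdef
  have hps : ∀ a ∈ s, 0 < p a := by
    intro a ha
    have : 0 < n a := (Finset.mem_filter.mp ha).2
    positivity
  have hzero : ∀ a ∈ Finset.univ, a ∉ s → p a = 0 := by
    intro a _ ha
    have : ¬ 0 < n a := fun h => ha (Finset.mem_filter.mpr ⟨Finset.mem_univ a, h⟩)
    have : n a = 0 := by omega
    simp [hpdef, this]
  have hnzero : ∀ a, a ∉ s → n a = 0 := by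
    intro a ha
    have : ¬ 0 < n a := fun h => ha (Finset.mem_filter.mpr ⟨Finset.mem_univ a, h⟩)
    omega
  have hws : ∑ a ∈ s, p a = 1 := by
    rw [Finset.sum_subset (Finset.subset_univ s) hzero, hp.2]
  set z : α → ℝ := fun a => Real.sqrt (f a / p a) with hzdef
  have hz0 : ∀ a, 0 ≤ z a := fun a => Real.sqrt_nonneg _
  have hamgm : ∏ a ∈ s, z a ^ (p a : ℝ) ≤ S := by
    refine le_trans (Real.geom_mean_le_arith_mean_weighted s p z
      (fun a _ => hp.1 a) hws (fun a _ => hz0 a)) ?_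
    have heq : ∀ a ∈ s, p a * z a = Real.sqrt (p a * f a) := by
      intro a ha
      have hpa := hps a ha
      rw [hzdef]
      rw [← Real.sqrt_sq hpa.le, ← Real.sqrt_mul (sq_nonneg _)]
      congr 1
      field_simp
      rw [Real.sqrt_sq hpa.le]
      ring
    rw [Finset.sum_congr rfl heq]
    exact Finset.sum_le_sum_of_subset_of_nonneg (Finset.subset_univ s)
      (fun a _ _ => Real.sqrt_nonneg _)
  set G : ℝ := ∏ a ∈ s, z a ^ (p a : ℝ) with hGdef
  have hG0 : 0 ≤ G := Finset.prod_nonneg fun a _ => Real.rpow_nonneg (hz0 a) _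
  have hGpow : G ^ (2 * M) = ∏ a ∈ s, (f a / p a) ^ n a := by
    rw [hGdef, ← Finset.prod_pow]
    refine Finset.prod_congr rfl fun a ha => ?_
    have hpa := hps a ha
    rw [← Real.rpow_natCast (z a ^ (p a : ℝ)) (2 * M), ← Real.rpow_mul (hz0 a)]
    have : p a * ((2 * M : ℕ) : ℝ) = ((2 * n a : ℕ) : ℝ) := by
      push_cast
      field_simp [hpdef]
      simp only [hpdef]
      exact div_mul_cancel₀ _ hMpos.ne'
    have hz2 : z a ^ 2 = f a / p a := Real.sq_sqrt (div_nonneg (hf.1 a) hpa.le)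
    rw [this, Real.rpow_natCast, pow_mul, hz2]
  have hmul : ∏ a, f a ^ n a = G ^ (2 * M) * ∏ a, p a ^ n a := by
    have h1 : ∏ a, f a ^ n a = ∏ a ∈ s, f a ^ n a := by
      refine (Finset.prod_subset (Finset.subset_univ s) ?_).symm
      intro a _ ha; rw [hnzero a ha, pow_zero]
    have h2 : ∏ a, p a ^ n a = ∏ a ∈ s, p a ^ n a := by
      refine (Finset.prod_subset (Finset.subset_univ s) ?_).symm
      intro a _ ha; rw [hnzero a ha, pow_zero]
    rw [h1, h2, hGpow, ← Finset.prod_mul_distrib]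
    refine Finset.prod_congr rfl fun a ha => ?_
    rw [← mul_pow, div_mul_cancel₀ _ (hps a ha).ne']
  rw [hmul]
  refine mul_le_mul ?_ le_rfl (Finset.prod_nonneg fun a _ => pow_nonneg (hp.1 a) _)
    (Real.exp_nonneg _)
  calc G ^ (2 * M) ≤ Real.exp (-t ^ 2) ^ (2 * M) :=
        pow_le_pow_left₀ hG0 (le_trans hamgm hSle) _
    _ = Real.exp (-2 * M * t ^ 2) := by
        rw [← Real.exp_nat_mul]
        congr 1
        push_cast
        ring

lemma type_sum_le (M : ℕ) (hM : 1 ≤ M) :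
    ∑ x : Fin M → α, ∏ a, empDist x a ^ (Finset.univ.filter fun i => x i = a).card
      ≤ ((M : ℝ) + 1) ^ (Fintype.card α) := by
  have hMpos : (0:ℝ) < M := by positivity
  have hcnt : ∀ (x : Fin M → α) (a : α), (Finset.univ.filter fun i => x i = a).card < M + 1 := by
    intro x a
    have := Finset.card_filter_le (Finset.univ : Finset (Fin M)) (fun i => x i = a)
    simp only [Finset.card_univ, Fintype.card_fin] at this
    omega
  set T : (Fin M → α) → (α → Fin (M + 1)) :=
    fun x a => ⟨(Finset.univ.filter fun i => x i = a).card, hcnt x a⟩ with hTdef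
  set F : (Fin M → α) → ℝ :=
    fun x => ∏ a, empDist x a ^ (Finset.univ.filter fun i => x i = a).card with hFdef
  have hfib := Finset.sum_fiberwise_of_maps_to
    (fun (x : Fin M → α) (_ : x ∈ Finset.univ) => Finset.mem_univ (T x)) F
  rw [← hfib]
  have hbound : ∀ ν : α → Fin (M + 1),
      ∑ x ∈ Finset.univ.filter fun x => T x = ν, F x ≤ 1 := by
    intro ν
    rcases Finset.eq_empty_or_nonempty (Finset.univ.filter fun x => T x = ν) with he | ⟨x₀, hx₀⟩
    · rw [he, Finset.sum_empty]; norm_num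
    · have hx₀' : T x₀ = ν := (Finset.mem_filter.mp hx₀).2
      set g : α → ℝ := fun a => ((ν a : ℕ) : ℝ) / M with hgdef
      have hg0 : ∀ a, 0 ≤ g a := fun a => div_nonneg (Nat.cast_nonneg _) hMpos.le
      have hgsum : ∑ a, g a = 1 := by
        rw [hgdef, ← Finset.sum_div, div_eq_one_iff_eq hMpos.ne']
        have : ∀ a, ((ν a : ℕ) : ℝ) = ((Finset.univ.filter fun i => x₀ i = a).card : ℝ) := by
          intro a; rw [← hx₀']
        rw [Finset.sum_congr rfl fun a _ => this a]
        exact_mod_cast congrArg Nat.cast (sum_card_fiber x₀)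
      have hFeq : ∀ x ∈ Finset.univ.filter fun x => T x = ν, F x = ∏ i, g (x i) := by
        intro x hx
        have hx' : T x = ν := (Finset.mem_filter.mp hx).2
        rw [prod_comp_eq_prod_pow x g, hFdef]
        refine Finset.prod_congr rfl fun a _ => ?_
        have h1 : (ν a : ℕ) = (Finset.univ.filter fun i => x i = a).card := by rw [← hx']
        show (((Finset.univ.filter fun i => x i = a).card : ℝ) / M)
            ^ (Finset.univ.filter fun i => x i = a).card
          = (((ν a : ℕ) : ℝ) / M) ^ (Finset.univ.filter fun i => x i = a).card
        rw [h1]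
      rw [Finset.sum_congr rfl hFeq]
      calc ∑ x ∈ Finset.univ.filter fun x => T x = ν, ∏ i, g (x i)
          ≤ ∑ x : Fin M → α, ∏ i, g (x i) :=
            Finset.sum_le_sum_of_subset_of_nonneg (Finset.filter_subset _ _)
              (fun x _ _ => Finset.prod_nonneg fun i _ => hg0 (x i))
        _ = (∑ a, g a) ^ M := (Fintype.sum_pow g M).symm
        _ = 1 := by rw [hgsum, one_pow]
  calc ∑ ν : α → Fin (M + 1), ∑ x ∈ Finset.univ.filter fun x => T x = ν, F x
      ≤ ∑ _ν : α → Fin (M + 1), (1 : ℝ) := Finset.sum_le_sum fun ν _ => hbound ν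
    _ = ((M : ℝ) + 1) ^ (Fintype.card α) := by
        rw [Finset.sum_const, Finset.card_univ, Fintype.card_fun, Fintype.card_fin]
        push_cast
        ring


end AuxHellinger

/-- If `X₁, …, X_M` are i.i.d. with pmf `f`, `p̂` is their empirical distribution, and
`δ ≥ H(q‖f)`, then `Pr(H(p̂‖q) ≥ δ) ≤ (M+1)^{|α|} · exp(−2M(δ − H(q‖f))²)`. -/
theorem prob_hellinger_emp_ge {α : Type*} [Fintype α] [DecidableEq α]
    (f q : α → ℝ) (hf : IsPmf f) (hq : IsPmf q) (M : ℕ) (hM : 1 ≤ M)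
    (δ : ℝ) (hδ : hellinger q f ≤ δ) :
    (∑ x : Fin M → α,
        Set.indicator {x : Fin M → α | δ ≤ hellinger (empDist x) q}
          (fun x => ∏ i, f (x i)) x) ≤
      ((M : ℝ) + 1) ^ (Fintype.card α) *
        Real.exp (-2 * M * (δ - hellinger q f) ^ 2) := by
  set t : ℝ := δ - hellinger q f with htdef
  have ht : 0 ≤ t := by simp [htdef]; linarith
  have step1 : ∀ x : Fin M → α,
      Set.indicator {x : Fin M → α | δ ≤ hellinger (empDist x) q}
        (fun x => ∏ i, f (x i)) x
      ≤ Real.exp (-2 * M * t ^ 2) *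
          ∏ a, empDist x a ^ (Finset.univ.filter fun i => x i = a).card := by
    intro x
    have hprod0 : 0 ≤ ∏ a, empDist x a ^ (Finset.univ.filter fun i => x i = a).card :=
      Finset.prod_nonneg fun a _ =>
        pow_nonneg (div_nonneg (Nat.cast_nonneg _) (Nat.cast_nonneg _)) _
    by_cases hx : δ ≤ hellinger (empDist x) q
    · rw [Set.indicator_of_mem (show x ∈ {x : Fin M → α | δ ≤ hellinger (empDist x) q} from hx)]
      have htri : t ≤ hellinger (empDist x) f := by
        have h1 := hellinger_triangle (empDist x) f q
        have h2 : hellinger f q = hellinger q f := hellinger_comm f q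
        simp only [htdef]
        linarith
      have hemp : empDist x = fun a => (((Finset.univ.filter fun i => x i = a).card : ℕ) : ℝ) / M := by
        funext a; rfl
      rw [prod_comp_eq_prod_pow x f]
      have := key_bound f hf M hM (fun a => (Finset.univ.filter fun i => x i = a).card)
        (sum_card_fiber x) t ht (by rw [← hemp]; exact htri)
      calc ∏ a, f a ^ (Finset.univ.filter fun i => x i = a).card
          ≤ Real.exp (-2 * M * t ^ 2) *
            ∏ a, (((Finset.univ.filter fun i => x i = a).card : ℝ) / M)
              ^ (Finset.univ.filter fun i => x i = a).card := this
        _ = _ := by rw [hemp]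
    · rw [Set.indicator_of_notMem (show x ∉ {x : Fin M → α | δ ≤ hellinger (empDist x) q} from hx)]
      exact mul_nonneg (Real.exp_nonneg _) hprod0
  calc (∑ x : Fin M → α,
        Set.indicator {x : Fin M → α | δ ≤ hellinger (empDist x) q}
          (fun x => ∏ i, f (x i)) x)
      ≤ ∑ x : Fin M → α, Real.exp (-2 * M * t ^ 2) *
          ∏ a, empDist x a ^ (Finset.univ.filter fun i => x i = a).card :=
        Finset.sum_le_sum fun x _ => step1 x
    _ = Real.exp (-2 * M * t ^ 2) *
        ∑ x : Fin M → α, ∏ a, empDist x a ^ (Finset.univ.filter fun i => x i = a).card := by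
        rw [Finset.mul_sum]
    _ ≤ Real.exp (-2 * M * t ^ 2) * (((M : ℝ) + 1) ^ (Fintype.card α)) :=
        mul_le_mul_of_nonneg_left (type_sum_le M hM) (Real.exp_nonneg _)
    _ = ((M : ℝ) + 1) ^ (Fintype.card α) * Real.exp (-2 * M * t ^ 2) := mul_comm _ _
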